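/- Let b_1,…,b_k ∈ ℝ^E be such that each inequality b_j·x ≥ 1 is valid for P and defines an NR-facet of P, and suppose the relaxation R_B determined by b_1,…,b_k has the parsimonious property. If c·x ≥ γ is valid for P and defines a non-NR facet of P, then it is impossible to write c = Σ_{j=1}^k t_j b_j − Σ_{v∈V} μ_v δ_v and γ = Σ_{j=1}^k t_j − Σ_{v∈V} μ_v with t_1,…,t_k ≥ 0 and μ ∈ ℝ^V. -/

import Mathlib

open scoped BigOperators

abbrev Edge (n : ℕ) := {e : Sym2 (Fin n) // ¬ e.IsDiag}

namespace TSP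
variable {n : ℕ}
noncomputable section

def dot (a x : Edge n → ℝ) : ℝ := ∑ e, a e * x e
def ev (a : Edge n → ℝ) (u v : Fin n) : ℝ :=
  if h : u = v then 0 else a ⟨s(u, v), fun hd => h (Sym2.mk_isDiag_iff.mp hd)⟩
def indic (u v : Fin n) : Edge n → ℝ := fun e => if e.val = s(u, v) then 1 else 0
def delta (u : Fin n) : Edge n → ℝ := fun e => if u ∈ e.val then 1/2 else 0
def RootedTri (u v w : Fin n) : Prop := v ≠ w ∧ u ≠ v ∧ u ≠ w
def tri (a : Edge n → ℝ) (u v w : Fin n) : ℝ := ev a v u + ev a u w - ev a v w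
def IsMetric (a : Edge n → ℝ) : Prop := ∀ u v w, RootedTri u v w → 0 ≤ tri a u v w
def IsTT (a : Edge n → ℝ) : Prop :=
  IsMetric a ∧ ∀ u, ∃ v w, RootedTri u v w ∧ tri a u v w = 0
def lam (a : Edge n → ℝ) (u : Fin n) : ℝ :=
  sInf {r | ∃ v w, RootedTri u v w ∧ r = tri a u v w}
def theta (a : Edge n → ℝ) : Edge n → ℝ := fun e => a e - ∑ u, lam a u * delta u e
def zvec (n : ℕ) : Edge n → ℝ := fun _ => 2 / ((n : ℝ) - 1)
def gamma (a : Edge n → ℝ) : ℝ := -1 + dot a (zvec n) - ∑ u, lam a u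
def nextF (i : Fin n) : Fin n := ⟨(i.val + 1) % n, Nat.mod_lt _ i.pos⟩
def hamVec (σ : Equiv.Perm (Fin n)) : Edge n → ℝ :=
  fun e => if ∃ i : Fin n, e.val = s(σ i, σ (nextF i)) then 1 else 0
def stsp (n : ℕ) : Set (Edge n → ℝ) :=
  convexHull ℝ {x | ∃ σ : Equiv.Perm (Fin n), x = hamVec σ}
def degree (x : Edge n → ℝ) (u : Fin n) : ℝ := ∑ e, if u ∈ e.val then x e else 0
lemma ev_symm (a : Edge n → ℝ) (u v : Fin n) : ev a u v = ev a v u := by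
  unfold ev
  rcases eq_or_ne u v with h | h
  · subst h; simp
  · rw [dif_neg h, dif_neg (Ne.symm h)]
    congr 1
    exact Subtype.ext (Sym2.eq_swap)
def supportGraph (x : Edge n → ℝ) : SimpleGraph (Fin n) where
  Adj u v := u ≠ v ∧ 0 < ev x u v
  symm := ⟨fun u v h => ⟨h.1.symm, by rw [ev_symm]; exact h.2⟩⟩
  loopless := ⟨fun u h => h.1 rfl⟩
def IsEulerian (x : Edge n → ℝ) : Prop :=
  (∀ e, ∃ m : ℕ, x e = m) ∧ (supportGraph x).Connected ∧
    ∀ u, ∃ m : ℕ, 0 < m ∧ degree x u = 2 * m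
def gtsp (n : ℕ) : Set (Edge n → ℝ) := convexHull ℝ {x | IsEulerian x}
def IsFaceOf (Q F : Set (Edge n → ℝ)) : Prop :=
  ∃ a α, (∀ x ∈ Q, α ≤ dot a x) ∧ F = {x ∈ Q | dot a x = α}
def IsGood (F : Set (Edge n → ℝ)) : Prop := ∀ e : Edge n, ∃ x ∈ F, 0 < x e
def adim (X : Set (Edge n → ℝ)) : ℕ := Module.finrank ℝ (affineSpan ℝ X).direction
def direc (F : Set (Edge n → ℝ)) : Submodule ℝ (Edge n → ℝ) :=
  Submodule.span ℝ {d | ∃ x ∈ F, ∃ y ∈ F, d = y - x}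
def shortcut (u v w : Fin n) : Edge n → ℝ :=
  fun e => indic v w e - indic v u e - indic u w e
def gtspPolar (n : ℕ) : Set (Edge n → ℝ) := {b | ∀ x ∈ gtsp n, 1 ≤ dot b x}

/-- The face of `S` defined by `a ∈ D_S`. -/
def faceS (a : Edge n → ℝ) : Set (Edge n → ℝ) :=
  {x ∈ stsp n | dot a x = dot a (zvec n) - 1}

/-- `D_S`: the points `a ∈ L` whose inequality `a·x ≥ a·z − 1` is valid for `S`
and defines a nonempty good face of `S`. -/
def DS (n : ℕ) : Set (Edge n → ℝ) :=
  {a | (∀ u, dot (delta u) a = 0) ∧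
       (∀ x ∈ stsp n, dot a (zvec n) - 1 ≤ dot a x) ∧
       (faceS a).Nonempty ∧ IsGood (faceS a)}

/-- `D_P`: TT points of `P^△` defining nonempty good faces of `P`. -/
def DP (n : ℕ) : Set (Edge n → ℝ) :=
  {b | b ∈ gtspPolar n ∧ IsTT b ∧
       ({x ∈ gtsp n | dot b x = 1}).Nonempty ∧ IsGood {x ∈ gtsp n | dot b x = 1}}

/-- `𝔉(a)`: faces of `P` definable by rotated versions of `a·x ≥ a·z − 1`. -/
def Frot (a : Edge n → ℝ) : Set (Set (Edge n → ℝ)) :=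
  {F | ∃ ξ : Fin n → ℝ,
    (∀ x ∈ gtsp n,
      dot a (zvec n) - 1 + dot (∑ u, ξ u • delta u) (zvec n)
        ≤ dot (a + ∑ u, ξ u • delta u) x) ∧
    F = {x ∈ gtsp n |
      dot (a + ∑ u, ξ u • delta u) x
        = dot a (zvec n) - 1 + dot (∑ u, ξ u • delta u) (zvec n)}}

/-- `E^u(a)`: the edges achieving the minimal triangle slack rooted at `u`. -/
def Eu (a : Edge n → ℝ) (u : Fin n) : Set (Edge n) :=
  {e | ∃ v w, RootedTri u v w ∧ e.val = s(v, w) ∧ tri a u v w = lam a u}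

def IsFacetP (n : ℕ) (G : Set (Edge n → ℝ)) : Prop :=
  IsFaceOf (gtsp n) G ∧ adim G = n * (n - 1) / 2 - 1
def IsFacetS (n : ℕ) (F : Set (Edge n → ℝ)) : Prop :=
  IsFaceOf (stsp n) F ∧ adim F + 1 = adim (stsp n)
def IsNRFacet (n : ℕ) (G : Set (Edge n → ℝ)) : Prop :=
  IsFacetP n G ∧ IsFacetS n (G ∩ stsp n)
def IsDegreeFacet (n : ℕ) (G : Set (Edge n → ℝ)) : Prop :=
  ∃ u, G = {x ∈ gtsp n | dot (delta u) x = 1}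
def IsNonNegFacet (n : ℕ) (G : Set (Edge n → ℝ)) : Prop :=
  ∃ e : Edge n, G = {x ∈ gtsp n | x e = 0}
def IsNonNRFacet (n : ℕ) (G : Set (Edge n → ℝ)) : Prop :=
  IsFacetP n G ∧ IsGood G ∧ ¬ IsDegreeFacet n G ∧
    adim (G ∩ stsp n) + 1 < adim (stsp n)

/-- Solution set of the relaxation `R_B` (degree inequalities). -/
def RBge {k : ℕ} (n : ℕ) (b : Fin k → Edge n → ℝ) : Set (Edge n → ℝ) :=
  {x | (∀ j, 1 ≤ dot (b j) x) ∧ (∀ v, 1 ≤ dot (delta v) x) ∧ ∀ e, 0 ≤ x e}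

/-- Solution set of `R_B` with degree equations. -/
def RBeq {k : ℕ} (n : ℕ) (b : Fin k → Edge n → ℝ) : Set (Edge n → ℝ) :=
  {x | (∀ j, 1 ≤ dot (b j) x) ∧ (∀ v, dot (delta v) x = 1) ∧ ∀ e, 0 ≤ x e}

/-- The parsimonious property of the relaxation `R_B`. -/
def Parsimonious {k : ℕ} (n : ℕ) (b : Fin k → Edge n → ℝ) : Prop :=
  ∀ c : Edge n → ℝ, IsMetric c →
    sInf (dot c '' RBge n b) = sInf (dot c '' RBeq n b)

/-- Adjacency in the ridge graph of `P`. -/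
def RidgeAdj (n : ℕ) (F G : Set (Edge n → ℝ)) : Prop :=
  IsFacetP n F ∧ IsFacetP n G ∧ F ≠ G ∧ adim (F ∩ G) = n * (n - 1) / 2 - 2

/-- `q_I = Σ_{u ∉ I} δ_u`. -/
def qI (n : ℕ) (I : Finset (Fin n)) : Edge n → ℝ := ∑ u ∈ Iᶜ, delta u

/-- The face `G_I` of `P`. -/
def GI (n : ℕ) (a : Edge n → ℝ) (I : Finset (Fin n)) : Set (Edge n → ℝ) :=
  {x ∈ gtsp n | dot (theta a + qI n I) x = gamma a + dot (qI n I) (zvec n)}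

end


section Helpers

/-! ### Basic dot-product lemmas -/

lemma dot_nonneg' {a x : Edge n → ℝ} (ha : ∀ e, 0 ≤ a e) (hx : ∀ e, 0 ≤ x e) :
    0 ≤ dot a x :=
  Finset.sum_nonneg fun e _ => mul_nonneg (ha e) (hx e)

lemma dot_delta_eq (u : Fin n) (x : Edge n → ℝ) : dot (delta u) x = degree x u / 2 := by
  unfold dot delta degree
  rw [Finset.sum_div]
  refine Finset.sum_congr rfl fun e _ => ?_
  split_ifs <;> ring

lemma dot_single (a : Edge n → ℝ) (E : Edge n) :
    dot a (fun e' => if e' = E then 1 else 0) = a E := by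
  unfold dot
  rw [Finset.sum_congr rfl (fun e _ => by split_ifs with h <;> simp [h] :
    ∀ e ∈ Finset.univ, a e * (if e = E then (1:ℝ) else 0) = if e = E then a E else 0)]
  simp

lemma indic_eq_single {p q : Fin n} (hpq : p ≠ q) :
    indic p q = fun e : Edge n => if e = (⟨s(p,q), fun hd => hpq (Sym2.mk_isDiag_iff.mp hd)⟩ : Edge n) then (1:ℝ) else 0 := by
  funext e
  unfold indic
  congr 1
  simp [Subtype.ext_iff]

lemma dot_indic {p q : Fin n} (hpq : p ≠ q) (a : Edge n → ℝ) :
    dot a (indic p q) = ev a p q := by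
  rw [indic_eq_single hpq, dot_single, ev, dif_neg hpq]

lemma dot_combo (c x y : Edge n → ℝ) (α β : ℝ) :
    dot c (α • x + β • y) = α * dot c x + β * dot c y := by
  unfold dot
  rw [Finset.mul_sum, Finset.mul_sum, ← Finset.sum_add_distrib]
  refine Finset.sum_congr rfl fun e _ => ?_
  simp [smul_eq_mul]; ring

lemma dot_sum_smul {ι : Type*} [Fintype ι] (c : Edge n → ℝ) (w : ι → ℝ) (p : ι → Edge n → ℝ) :
    dot c (∑ i, w i • p i) = ∑ i, w i * dot c (p i) := by
  unfold dot
  have : ∀ e : Edge n, c e * (∑ i, w i • p i) e = ∑ i, w i * (c e * p i e) := by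
    intro e
    simp only [Finset.sum_apply, Pi.smul_apply, smul_eq_mul, Finset.mul_sum]
    exact Finset.sum_congr rfl fun i _ => by ring
  rw [Finset.sum_congr rfl fun e _ => this e, Finset.sum_comm]
  exact Finset.sum_congr rfl fun i _ => by rw [Finset.mul_sum]

/-! ### Convexity facts about `gtsp` -/

lemma gtsp_nonneg {x : Edge n → ℝ} (hx : x ∈ gtsp n) (e : Edge n) : 0 ≤ x e := by
  have h : gtsp n ⊆ {y : Edge n → ℝ | ∀ e, 0 ≤ y e} := by
    refine convexHull_min ?_ ?_
    · intro y hy e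
      obtain ⟨m, hm⟩ := hy.1 e
      rw [hm]; positivity
    · intro y hy z hz α β hα hβ hαβ e
      have := hy e; have := hz e
      simp only [Pi.add_apply, Pi.smul_apply, smul_eq_mul]
      nlinarith
  exact h hx e

lemma eulerian_nonneg {x : Edge n → ℝ} (hx : IsEulerian x) (e : Edge n) : 0 ≤ x e := by
  obtain ⟨m, hm⟩ := hx.1 e
  rw [hm]; positivity

lemma gtsp_delta_ge {x : Edge n → ℝ} (hx : x ∈ gtsp n) (v : Fin n) :
    1 ≤ dot (delta v) x := by
  have h : gtsp n ⊆ {y : Edge n → ℝ | 1 ≤ dot (delta v) y} := by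
    refine convexHull_min ?_ ?_
    · intro y hy
      obtain ⟨m, hm0, hdeg⟩ := hy.2.2 v
      have : dot (delta v) y = m := by rw [dot_delta_eq, hdeg]; ring
      rw [Set.mem_setOf_eq, this]
      exact_mod_cast hm0
    · intro y hy z hz α β hα hβ hαβ
      have h1 : 1 ≤ dot (delta v) y := hy
      have h2 : 1 ≤ dot (delta v) z := hz
      rw [Set.mem_setOf_eq, dot_combo]
      nlinarith
  exact h hx

lemma convex_gtsp : Convex ℝ (gtsp n) := convex_convexHull ℝ _

end Helpers


section Helpers2

/-! ### Arithmetic of `nextF` and `prevF` -/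

def prevF (j : Fin n) : Fin n := ⟨(j.val + (n - 1)) % n, Nat.mod_lt _ j.pos⟩

lemma nextF_prevF (j : Fin n) : nextF (prevF j) = j := by
  have hn : 0 < n := j.pos
  apply Fin.ext
  show ((j.val + (n-1)) % n + 1) % n = j.val
  rw [Nat.mod_add_mod]
  have : j.val + (n-1) + 1 = j.val + n := by omega
  rw [this, Nat.add_mod_right, Nat.mod_eq_of_lt j.isLt]

lemma prevF_nextF (j : Fin n) : prevF (nextF j) = j := by
  have hn : 0 < n := j.pos
  apply Fin.ext
  show ((j.val + 1) % n + (n-1)) % n = j.val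
  rw [Nat.mod_add_mod]
  have : j.val + 1 + (n-1) = j.val + n := by omega
  rw [this, Nat.add_mod_right, Nat.mod_eq_of_lt j.isLt]

lemma nextF_ne (hn : 2 ≤ n) (j : Fin n) : nextF j ≠ j := by
  intro h
  have h' : (j.val + 1) % n = j.val := congrArg Fin.val h
  rcases lt_or_ge (j.val + 1) n with h1 | h1
  · rw [Nat.mod_eq_of_lt h1] at h'; omega
  · have hj : j.val = n - 1 := by have := j.isLt; omega
    have : j.val + 1 = n := by omega
    rw [this, Nat.mod_self] at h'; omega

lemma prevF_ne_nextF (hn : 3 ≤ n) (j : Fin n) : prevF j ≠ nextF j := by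
  intro h
  have h' : (j.val + (n-1)) % n = (j.val + 1) % n := congrArg Fin.val h
  have hlt := j.isLt
  rcases Nat.lt_or_ge (j.val + 1) n with h1 | h1
  · rw [Nat.mod_eq_of_lt h1] at h'
    rcases Nat.eq_zero_or_pos j.val with h0 | h0
    · rw [h0] at h'
      simp only [Nat.zero_add] at h'
      rw [Nat.mod_eq_of_lt (by omega)] at h'
      omega
    · have : j.val + (n-1) = (j.val - 1) + n := by omega
      rw [this, Nat.add_mod_right, Nat.mod_eq_of_lt (by omega)] at h'
      omega
  · have hj : j.val = n - 1 := by omega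
    have e1 : j.val + 1 = n := by omega
    rw [e1, Nat.mod_self] at h'
    have : j.val + (n-1) = (j.val - 1) + n := by omega
    rw [this, Nat.add_mod_right, Nat.mod_eq_of_lt (by omega)] at h'
    omega

/-! ### `hamVec` is a connected Eulerian vector -/

lemma reachable_mono' {V : Type*} {G H : SimpleGraph V}
    (h : ∀ p q, G.Adj p q → H.Reachable p q) {p q : V} (hr : G.Reachable p q) :
    H.Reachable p q := by
  obtain ⟨wk⟩ := hr
  induction wk with
  | nil => exact SimpleGraph.Reachable.refl _
  | cons ha _ ih => exact (h _ _ ha).trans ih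

lemma degree_hamVec (hn : 3 ≤ n) (σ : Equiv.Perm (Fin n)) (p : Fin n) :
    degree (hamVec σ) p = 2 := by
  set j := σ.symm p with hj
  have hp : p = σ j := by rw [hj]; simp
  have hE1ne : σ (prevF j) ≠ σ j := fun h => by
    have := σ.injective h
    have h2 := nextF_prevF j
    rw [this] at h2
    exact nextF_ne (by omega) j h2
  have hE2ne : σ j ≠ σ (nextF j) := fun h => (nextF_ne (by omega) j (σ.injective h).symm)
  set E1 : Edge n := ⟨s(σ (prevF j), σ j), fun hd => hE1ne (Sym2.mk_isDiag_iff.mp hd)⟩ with hE1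
  set E2 : Edge n := ⟨s(σ j, σ (nextF j)), fun hd => hE2ne (Sym2.mk_isDiag_iff.mp hd)⟩ with hE2
  have hE12 : E1 ≠ E2 := by
    simp only [hE1, hE2, Ne, Subtype.ext_iff, Sym2.eq_iff]
    rintro (⟨h1, h2⟩ | ⟨h1, h2⟩)
    · exact hE2ne h2
    · exact prevF_ne_nextF hn j (σ.injective h1)
  have key : ∀ e : Edge n, (if p ∈ e.val then hamVec σ e else 0)
      = (if e = E1 then (1:ℝ) else 0) + (if e = E2 then 1 else 0) := by
    intro e
    by_cases h1 : e = E1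
    · subst h1
      rw [if_neg hE12, if_pos rfl]
      have hmem : p ∈ E1.val := by rw [hp, hE1]; simp [Sym2.mem_iff]
      rw [if_pos hmem]
      have : hamVec σ E1 = 1 := by
        unfold hamVec
        rw [if_pos ⟨prevF j, by rw [hE1, nextF_prevF]⟩]
      rw [this]; ring
    · by_cases h2 : e = E2
      · subst h2
        rw [if_neg (Ne.symm hE12), if_pos (show E2 = E2 from rfl)]
        have hmem : p ∈ E2.val := by rw [hp, hE2]; simp [Sym2.mem_iff]
        rw [if_pos hmem]
        have : hamVec σ E2 = 1 := by
          unfold hamVec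
          rw [if_pos ⟨j, by rw [hE2]⟩]
        rw [this]; ring
      · rw [if_neg h1, if_neg h2]
        by_cases hmem : p ∈ e.val
        · have hno : ¬ ∃ i : Fin n, e.val = s(σ i, σ (nextF i)) := by
            rintro ⟨i, hi⟩
            have hpmem : p ∈ s(σ i, σ (nextF i)) := hi ▸ hmem
            rcases Sym2.mem_iff.mp hpmem with hpi | hpi
            · apply h2
              apply Subtype.ext
              rw [hi, hE2]
              have : i = j := by rw [hj, hpi]; simp
              rw [this]
            · apply h1
              apply Subtype.ext
              rw [hi, hE1]
              have hij : nextF i = j := by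
                rw [hp] at hpi
                exact σ.injective hpi.symm
              have : i = prevF j := by rw [← hij, prevF_nextF]
              rw [this, nextF_prevF]
          rw [if_pos hmem]
          unfold hamVec
          rw [if_neg hno]
          norm_num
        · rw [if_neg hmem]; norm_num
  unfold degree
  rw [Finset.sum_congr rfl fun e _ => key e, Finset.sum_add_distrib,
    Finset.sum_ite_eq' Finset.univ E1 (fun _ => (1:ℝ)),
    Finset.sum_ite_eq' Finset.univ E2 (fun _ => (1:ℝ))]
  simp; norm_num

lemma hamVec_eulerian (hn : 3 ≤ n) (σ : Equiv.Perm (Fin n)) : IsEulerian (hamVec σ) := by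
  refine ⟨?_, ?_, ?_⟩
  · intro e
    unfold hamVec
    split_ifs
    · exact ⟨1, by norm_num⟩
    · exact ⟨0, by norm_num⟩
  · haveI : Nonempty (Fin n) := ⟨⟨0, by omega⟩⟩
    have hadj : ∀ i : Fin n, (supportGraph (hamVec σ)).Adj (σ i) (σ (nextF i)) := by
      intro i
      have hne : σ i ≠ σ (nextF i) := fun h => nextF_ne (by omega) i (σ.injective h).symm
      refine ⟨hne, ?_⟩
      rw [ev, dif_neg hne]
      show (0:ℝ) < hamVec σ _
      unfold hamVec
      rw [if_pos ⟨i, rfl⟩]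
      norm_num
    have hreach : ∀ m : ℕ, (supportGraph (hamVec σ)).Reachable (σ ⟨0 % n, Nat.mod_lt _ (by omega)⟩)
        (σ ⟨m % n, Nat.mod_lt _ (by omega)⟩) := by
      intro m
      induction m with
      | zero => exact SimpleGraph.Reachable.refl _
      | succ m ih =>
        refine ih.trans ?_
        have : nextF (⟨m % n, Nat.mod_lt _ (by omega)⟩ : Fin n)
            = ⟨(m+1) % n, Nat.mod_lt _ (by omega)⟩ := by
          apply Fin.ext
          show (m % n + 1) % n = (m + 1) % n
          rw [Nat.mod_add_mod]
        exact (this ▸ hadj ⟨m % n, Nat.mod_lt _ (by omega)⟩).reachable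
    constructor
    intro p q
    have h : ∀ r : Fin n, (supportGraph (hamVec σ)).Reachable (σ ⟨0 % n, Nat.mod_lt _ (by omega)⟩) r := by
      intro r
      have : r = σ ⟨(σ.symm r).val % n, Nat.mod_lt _ (by omega)⟩ := by
        rw [show (⟨(σ.symm r).val % n, Nat.mod_lt _ (by omega)⟩ : Fin n) = σ.symm r from
          Fin.ext (Nat.mod_eq_of_lt (σ.symm r).isLt)]
        simp
      rw [this]
      exact hreach _
    exact (h p).symm.trans (h q)
  · intro u
    exact ⟨1, by norm_num, by rw [degree_hamVec hn σ u]; norm_num⟩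

lemma hamVec_mem_gtsp (hn : 3 ≤ n) (σ : Equiv.Perm (Fin n)) : hamVec σ ∈ gtsp n :=
  subset_convexHull ℝ _ (hamVec_eulerian hn σ)

lemma stsp_subset_gtsp (hn : 3 ≤ n) : stsp n ⊆ gtsp n := by
  refine convexHull_min ?_ convex_gtsp
  rintro x ⟨σ, rfl⟩
  exact hamVec_mem_gtsp hn σ

end Helpers2


section Helpers3

/-! ### Eulerian surgery: replacing an edge `vw` by the path `v-u-w` -/

lemma eulerian_shortcut {u v w : Fin n} (h : RootedTri u v w) {z : Edge n → ℝ}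
    (hz : IsEulerian z)
    (h1 : 1 ≤ z ⟨s(v,w), fun hd => h.1 (Sym2.mk_isDiag_iff.mp hd)⟩) :
    IsEulerian (fun e => z e + indic v u e + indic u w e - indic v w e) := by
  obtain ⟨hvw, huv, huw⟩ := h
  set Evu : Edge n := ⟨s(v,u), fun hd => huv (Sym2.mk_isDiag_iff.mp hd).symm⟩ with hEvu
  set Euw : Edge n := ⟨s(u,w), fun hd => huw (Sym2.mk_isDiag_iff.mp hd)⟩ with hEuw
  set Evw : Edge n := ⟨s(v,w), fun hd => hvw (Sym2.mk_isDiag_iff.mp hd)⟩ with hEvw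
  have hd12 : Evu ≠ Euw := by
    simp only [hEvu, hEuw, Ne, Subtype.ext_iff, Sym2.eq_iff]
    rintro (⟨ha, hb⟩ | ⟨ha, hb⟩) <;> simp_all
  have hd13 : Evu ≠ Evw := by
    simp only [hEvu, hEvw, Ne, Subtype.ext_iff, Sym2.eq_iff]
    rintro (⟨ha, hb⟩ | ⟨ha, hb⟩) <;> simp_all
  have hd23 : Euw ≠ Evw := by
    simp only [hEuw, hEvw, Ne, Subtype.ext_iff, Sym2.eq_iff]
    rintro (⟨ha, hb⟩ | ⟨ha, hb⟩) <;> simp_all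
  have hind : ∀ e : Edge n,
      indic v u e = (if e = Evu then (1:ℝ) else 0) ∧
      indic u w e = (if e = Euw then (1:ℝ) else 0) ∧
      indic v w e = (if e = Evw then (1:ℝ) else 0) := by
    intro e
    refine ⟨?_, ?_, ?_⟩ <;> · unfold indic; congr 1; simp [Subtype.ext_iff, hEvu, hEuw, hEvw]
  set y : Edge n → ℝ := fun e => z e + indic v u e + indic u w e - indic v w e with hy
  have hyval : ∀ e : Edge n, y e
      = z e + (if e = Evu then (1:ℝ) else 0) + (if e = Euw then 1 else 0)
        - (if e = Evw then 1 else 0) := by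
    intro e
    rw [hy]
    obtain ⟨ha, hb, hc⟩ := hind e
    simp only [ha, hb, hc]
  -- integrality
  have hint : ∀ e, ∃ m : ℕ, y e = m := by
    intro e
    obtain ⟨m, hm⟩ := hz.1 e
    by_cases he3 : e = Evw
    · subst he3
      have hm1 : 1 ≤ m := by
        have : (1:ℝ) ≤ (m:ℝ) := by rw [← hm]; exact h1
        exact_mod_cast this
      refine ⟨m - 1, ?_⟩
      rw [hyval, if_neg (show ¬Evw = Evu from fun hh => hd13 hh.symm),
        if_neg (show ¬Evw = Euw from fun hh => hd23 hh.symm), if_pos rfl, hm]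
      push_cast [Nat.cast_sub hm1]
      ring
    · by_cases he1 : e = Evu
      · subst he1
        refine ⟨m + 1, ?_⟩
        rw [hyval, if_pos rfl, if_neg hd12, if_neg hd13, hm]
        push_cast; ring
      · by_cases he2 : e = Euw
        · subst he2
          refine ⟨m + 1, ?_⟩
          rw [hyval, if_neg (Ne.symm hd12), if_pos rfl, if_neg hd23, hm]
          push_cast; ring
        · refine ⟨m, ?_⟩
          rw [hyval, if_neg he1, if_neg he2, if_neg he3, hm]
          ring
  have hynn : ∀ e, 0 ≤ y e := by
    intro e; obtain ⟨m, hm⟩ := hint e; rw [hm]; positivity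
  have hznn : ∀ e, 0 ≤ z e := eulerian_nonneg hz
  refine ⟨hint, ?_, ?_⟩
  · -- connectivity
    have hadj_vu : (supportGraph y).Adj v u := by
      refine ⟨huv.symm, ?_⟩
      rw [ev, dif_neg (Ne.symm huv)]
      show (0:ℝ) < y Evu
      rw [hyval, if_pos rfl, if_neg hd12, if_neg hd13]
      have := hznn Evu
      simp only [add_zero, sub_zero]
      linarith [hznn Evu]
    have hadj_uw : (supportGraph y).Adj u w := by
      refine ⟨huw, ?_⟩
      rw [ev, dif_neg huw]
      show (0:ℝ) < y Euw
      rw [hyval, if_neg (Ne.symm hd12), if_pos rfl, if_neg hd23]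
      linarith [hznn Euw]
    have key : ∀ p q, (supportGraph z).Adj p q → (supportGraph y).Reachable p q := by
      intro p q ⟨hpq, hpos⟩
      by_cases hc : s(p, q) = s(v, w)
      · rcases Sym2.eq_iff.mp hc with ⟨hpv, hqw⟩ | ⟨hpw, hqv⟩
        · subst hpv; subst hqw
          exact (hadj_vu.reachable).trans hadj_uw.reachable
        · subst hpw; subst hqv
          exact ((hadj_vu.reachable).trans hadj_uw.reachable).symm
      · refine (SimpleGraph.Adj.reachable ⟨hpq, ?_⟩)
        rw [ev, dif_neg hpq] at hpos ⊢
        set E : Edge n := ⟨s(p,q), _⟩ with hE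
        show (0:ℝ) < y E
        have hnE : E ≠ Evw := by
          simp only [hE, hEvw, Ne, Subtype.ext_iff]; exact hc
        rw [hyval, if_neg hnE]
        have h01 : (0:ℝ) ≤ (if E = Evu then (1:ℝ) else 0) := by split_ifs <;> norm_num
        have h02 : (0:ℝ) ≤ (if E = Euw then (1:ℝ) else 0) := by split_ifs <;> norm_num
        simp only [sub_zero]
        linarith
    have hconn := hz.2.1
    haveI : Nonempty (Fin n) := hconn.nonempty
    exact ⟨fun p q => reachable_mono' key (hconn.preconnected p q)⟩
  · -- degrees
    intro p
    obtain ⟨m, hm0, hdeg⟩ := hz.2.2 p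
    have hsplit : degree y p = degree z p
        + (if p ∈ Evu.val then (1:ℝ) else 0) + (if p ∈ Euw.val then 1 else 0)
        - (if p ∈ Evw.val then 1 else 0) := by
      unfold degree
      have step : ∀ e : Edge n, (if p ∈ e.val then y e else 0)
          = (if p ∈ e.val then z e else 0)
            + (if p ∈ e.val then (if e = Evu then (1:ℝ) else 0) else 0)
            + (if p ∈ e.val then (if e = Euw then (1:ℝ) else 0) else 0)
            - (if p ∈ e.val then (if e = Evw then (1:ℝ) else 0) else 0) := by
        intro e
        rw [hyval]
        split_ifs <;> ring
      rw [Finset.sum_congr rfl fun e _ => step e]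
      rw [Finset.sum_sub_distrib, Finset.sum_add_distrib, Finset.sum_add_distrib]
      congr 1
      · congr 1
        · congr 1
          · rw [Finset.sum_congr rfl (fun e _ => by
                by_cases he : e = Evu
                · subst he; simp
                · simp [he] :
              ∀ e ∈ Finset.univ, (if p ∈ e.val then (if e = Evu then (1:ℝ) else 0) else 0)
                = if e = Evu then (if p ∈ Evu.val then (1:ℝ) else 0) else 0),
              Finset.sum_ite_eq' Finset.univ Evu (fun _ => if p ∈ Evu.val then (1:ℝ) else 0)]
            simp
        · rw [Finset.sum_congr rfl (fun e _ => by
              by_cases he : e = Euw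
              · subst he; simp
              · simp [he] :
            ∀ e ∈ Finset.univ, (if p ∈ e.val then (if e = Euw then (1:ℝ) else 0) else 0)
              = if e = Euw then (if p ∈ Euw.val then (1:ℝ) else 0) else 0),
            Finset.sum_ite_eq' Finset.univ Euw (fun _ => if p ∈ Euw.val then (1:ℝ) else 0)]
          simp
      · rw [Finset.sum_congr rfl (fun e _ => by
            by_cases he : e = Evw
            · subst he; simp
            · simp [he] :
          ∀ e ∈ Finset.univ, (if p ∈ e.val then (if e = Evw then (1:ℝ) else 0) else 0)
            = if e = Evw then (if p ∈ Evw.val then (1:ℝ) else 0) else 0),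
          Finset.sum_ite_eq' Finset.univ Evw (fun _ => if p ∈ Evw.val then (1:ℝ) else 0)]
        simp
    by_cases hpu : p = u
    · subst hpu
      refine ⟨m + 1, by omega, ?_⟩
      rw [hsplit, hdeg, if_pos (by rw [hEvu]; simp [Sym2.mem_iff]),
        if_pos (by rw [hEuw]; simp [Sym2.mem_iff]),
        if_neg (by rw [hEvw]; simp [Sym2.mem_iff]; exact ⟨huv, huw⟩)]
      push_cast; ring
    · by_cases hpv : p = v
      · subst hpv
        refine ⟨m, hm0, ?_⟩
        rw [hsplit, hdeg, if_pos (by rw [hEvu]; simp [Sym2.mem_iff]),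
          if_neg (by rw [hEuw]; simp [Sym2.mem_iff]; exact ⟨fun hh => hpu hh, fun hh => hvw hh⟩),
          if_pos (by rw [hEvw]; simp [Sym2.mem_iff])]
        ring
      · by_cases hpw : p = w
        · subst hpw
          refine ⟨m, hm0, ?_⟩
          rw [hsplit, hdeg, if_neg (by rw [hEvu]; simp [Sym2.mem_iff]; exact ⟨fun hh => hvw hh.symm, fun hh => hpu hh⟩),
            if_pos (by rw [hEuw]; simp [Sym2.mem_iff]),
            if_pos (by rw [hEvw]; simp [Sym2.mem_iff])]
          ring
        · refine ⟨m, hm0, ?_⟩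
          rw [hsplit, hdeg,
            if_neg (by rw [hEvu]; simp [Sym2.mem_iff]; exact ⟨fun hh => hpv hh, fun hh => hpu hh⟩),
            if_neg (by rw [hEuw]; simp [Sym2.mem_iff]; exact ⟨fun hh => hpu hh, fun hh => hpw hh⟩),
            if_neg (by rw [hEvw]; simp [Sym2.mem_iff]; exact ⟨fun hh => hpv hh, fun hh => hpw hh⟩)]
          ring

end Helpers3


section Helpers4

lemma card_edge : Fintype.card (Edge n) = n*(n-1)/2 := by
  rw [show Fintype.card (Edge n) = Fintype.card {e : Sym2 (Fin n) // ¬ e.IsDiag} from rfl,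
    Sym2.card_subtype_not_diag, Fintype.card_fin, Nat.choose_two_right]

/-- `dot a` as a linear map in the second argument. -/
def dotL (a : Edge n → ℝ) : (Edge n → ℝ) →ₗ[ℝ] ℝ where
  toFun x := dot a x
  map_add' x y := by
    unfold dot
    rw [← Finset.sum_add_distrib]
    exact Finset.sum_congr rfl fun e _ => by simp [mul_add]
  map_smul' r x := by
    unfold dot
    simp only [RingHom.id_apply, smul_eq_mul, Finset.mul_sum, Pi.smul_apply]
    exact Finset.sum_congr rfl fun e _ => by ring

lemma dotL_apply (a x : Edge n → ℝ) : dotL a x = dot a x := rfl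

lemma dot_finsum {ι : Type*} (t : Finset ι) (c : Edge n → ℝ) (w : ι → ℝ)
    (p : ι → Edge n → ℝ) :
    dot c (∑ i ∈ t, w i • p i) = ∑ i ∈ t, w i * dot c (p i) := by
  unfold dot
  have : ∀ e : Edge n, c e * (∑ i ∈ t, w i • p i) e = ∑ i ∈ t, w i * (c e * p i e) := by
    intro e
    simp only [Finset.sum_apply, Pi.smul_apply, smul_eq_mul, Finset.mul_sum]
    exact Finset.sum_congr rfl fun i _ => by ring
  rw [Finset.sum_congr rfl fun e _ => this e, Finset.sum_comm]
  exact Finset.sum_congr rfl fun i _ => by rw [Finset.mul_sum]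

lemma dot_shortcut {u v w : Fin n} (hvw : v ≠ w) (huv : u ≠ v) (huw : u ≠ w)
    (c z : Edge n → ℝ) :
    dot c (fun e => z e + indic v u e + indic u w e - indic v w e)
      = dot c z + tri c u v w := by
  have expand : dot c (fun e => z e + indic v u e + indic u w e - indic v w e)
      = dot c z + dot c (indic v u) + dot c (indic u w) - dot c (indic v w) := by
    unfold dot
    rw [← Finset.sum_add_distrib, ← Finset.sum_add_distrib, ← Finset.sum_sub_distrib]
    exact Finset.sum_congr rfl fun e _ => by ring
  rw [expand, dot_indic (Ne.symm huv), dot_indic huw, dot_indic hvw]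
  unfold tri
  rw [ev_symm c v u]
  ring

/-- Validity plus a good face forces the normal vector to be metric. -/
lemma metric_of_good (c : Edge n → ℝ) (γ : ℝ)
    (hval : ∀ x ∈ gtsp n, γ ≤ dot c x)
    (hgood : IsGood {x ∈ gtsp n | dot c x = γ}) : IsMetric c := by
  rintro u v w ⟨hvw, huv, huw⟩
  set Evw : Edge n := ⟨s(v,w), fun hd => hvw (Sym2.mk_isDiag_iff.mp hd)⟩ with hEvw
  obtain ⟨x, ⟨hxg, hxγ⟩, hxe⟩ := hgood Evw
  rw [gtsp, convexHull_eq] at hxg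
  obtain ⟨ι, tf, wgt, zf, hw0, hw1, hzS, hcm⟩ := hxg
  have hxsum : x = ∑ i ∈ tf, wgt i • zf i := by
    rw [← hcm, Finset.centerMass_eq_of_sum_1 _ _ hw1]
  have hxcoord : x Evw = ∑ i ∈ tf, wgt i * zf i Evw := by
    rw [hxsum]; simp [Finset.sum_apply]
  obtain ⟨i₀, hi₀t, hi₀⟩ : ∃ i ∈ tf, 0 < wgt i * zf i Evw := by
    by_contra hcon
    push_neg at hcon
    have : x Evw ≤ 0 := hxcoord ▸ Finset.sum_nonpos hcon
    linarith
  have hwpos : 0 < wgt i₀ := by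
    rcases lt_or_eq_of_le (hw0 i₀ hi₀t) with h | h
    · exact h
    · rw [← h] at hi₀; simp at hi₀
  have hzpos : 0 < zf i₀ Evw := by
    by_contra hcon
    push_neg at hcon
    nlinarith
  have hzE : IsEulerian (zf i₀) := hzS i₀ hi₀t
  have hz1 : 1 ≤ zf i₀ Evw := by
    obtain ⟨m, hm⟩ := hzE.1 Evw
    rw [hm] at hzpos ⊢
    have : 1 ≤ m := by exact_mod_cast Nat.pos_of_ne_zero (by rintro rfl; simp at hzpos)
    exact_mod_cast this
  set y : Edge n → ℝ := fun e => zf i₀ e + indic v u e + indic u w e - indic v w e with hydef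
  have hyE : IsEulerian y := eulerian_shortcut ⟨hvw, huv, huw⟩ hzE hz1
  haveI : DecidableEq ι := Classical.decEq ι
  set zf' : ι → Edge n → ℝ := fun i => if i = i₀ then y else zf i with hzf'
  set x' : Edge n → ℝ := ∑ i ∈ tf, wgt i • zf' i with hx'
  have hx'mem : x' ∈ gtsp n := by
    rw [hx', ← Finset.centerMass_eq_of_sum_1 _ _ hw1]
    refine Finset.centerMass_mem_convexHull tf hw0 (by rw [hw1]; norm_num) ?_
    intro i hi
    by_cases h : i = i₀
    · subst h; simp only [hzf', if_pos rfl]; exact hyE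
    · simp only [hzf', if_neg h]; exact hzS i hi
  have hdot' : dot c x' = dot c x + wgt i₀ * tri c u v w := by
    rw [hx', hxsum, dot_finsum, dot_finsum]
    rw [← Finset.sum_erase_add _ _ hi₀t, ← Finset.sum_erase_add _ (fun i => wgt i * dot c (zf i)) hi₀t]
    have h1 : ∀ i ∈ tf.erase i₀, wgt i * dot c (zf' i) = wgt i * dot c (zf i) := by
      intro i hi
      rw [hzf']
      simp only [if_neg (Finset.ne_of_mem_erase hi)]
    rw [Finset.sum_congr rfl h1]
    have h2 : dot c (zf' i₀) = dot c (zf i₀) + tri c u v w := by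
      have hz'y : zf' i₀ = y := by rw [hzf']; simp
      rw [hz'y, hydef, dot_shortcut hvw huv huw]
    rw [h2]
    ring
  have := hval x' hx'mem
  rw [hdot', hxγ] at this
  nlinarith

lemma nonneg_of_metric (hn : 3 ≤ n) {c : Edge n → ℝ} (hm : IsMetric c) (e : Edge n) :
    0 ≤ c e := by
  obtain ⟨val, prop⟩ := e
  induction val using Sym2.ind with
  | _ v w =>
    have hvw : v ≠ w := fun h => prop (Sym2.mk_isDiag_iff.mpr h)
    obtain ⟨u, hu⟩ : ∃ u : Fin n, u ∉ ({v, w} : Finset (Fin n)) := by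
      by_contra hcon
      push_neg at hcon
      have : (Finset.univ : Finset (Fin n)).card ≤ ({v, w} : Finset (Fin n)).card :=
        Finset.card_le_card fun i _ => hcon i
      have h2 : ({v, w} : Finset (Fin n)).card ≤ 2 := Finset.card_insert_le _ _ |>.trans (by simp)
      rw [Finset.card_univ, Fintype.card_fin] at this
      omega
    simp only [Finset.mem_insert, Finset.mem_singleton, not_or] at hu
    obtain ⟨huv, huw⟩ := hu
    have h1 := hm v w u ⟨Ne.symm huw, hvw, Ne.symm huv⟩
    have h2 := hm w u v ⟨huv, Ne.symm huw, Ne.symm hvw⟩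
    unfold tri at h1 h2
    have s1 := ev_symm c v u
    have s2 := ev_symm c u w
    have s3 := ev_symm c w v
    have hcew : ev c v w = c ⟨s(v, w), prop⟩ := by rw [ev, dif_neg hvw]
    rw [← hcew]
    linarith

/-- If a face with hyperplane-sized affine hull lies in the hyperplane `a·x = α`,
then the whole hyperplane satisfies `c·x = γ`. -/
lemma hyperplane_absorb (G : Set (Edge n → ℝ)) (hGne : G.Nonempty)
    (hGdim : adim G = Fintype.card (Edge n) - 1)
    (a : Edge n → ℝ) (ha : a ≠ 0) (α : ℝ) (hGa : ∀ x ∈ G, dot a x = α)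
    (c : Edge n → ℝ) (γ : ℝ) (hGc : ∀ x ∈ G, dot c x = γ)
    {y : Edge n → ℝ} (hy : dot a y = α) : dot c y = γ := by
  obtain ⟨e0, he0⟩ := Function.ne_iff.mp ha
  simp only [Pi.zero_apply] at he0
  haveI : Nonempty (Edge n) := ⟨e0⟩
  have hcard : 1 ≤ Fintype.card (Edge n) := Fintype.card_pos
  have hspan_le : vectorSpan ℝ G ≤ LinearMap.ker (dotL a) := by
    refine Submodule.span_le.mpr ?_
    rintro d hd
    obtain ⟨x1, hx1, x2, hx2, rfl⟩ := Set.mem_vsub.mp hd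
    simp only [SetLike.mem_coe, LinearMap.mem_ker, vsub_eq_sub, map_sub]
    rw [dotL_apply, dotL_apply, hGa x1 hx1, hGa x2 hx2, sub_self]
  have hspanc : vectorSpan ℝ G ≤ LinearMap.ker (dotL c) := by
    refine Submodule.span_le.mpr ?_
    rintro d hd
    obtain ⟨x1, hx1, x2, hx2, rfl⟩ := Set.mem_vsub.mp hd
    simp only [SetLike.mem_coe, LinearMap.mem_ker, vsub_eq_sub, map_sub]
    rw [dotL_apply, dotL_apply, hGc x1 hx1, hGc x2 hx2, sub_self]
  have hsurj : Function.Surjective (dotL a) := by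
    intro r
    refine ⟨(r / a e0) • (fun e' => if e' = e0 then (1:ℝ) else 0 : Edge n → ℝ), ?_⟩
    rw [map_smul, dotL_apply, dot_single, smul_eq_mul, div_mul_cancel₀ _ he0]
  have hrank := LinearMap.finrank_range_add_finrank_ker (dotL a)
  rw [LinearMap.range_eq_top.mpr hsurj, finrank_top, Module.finrank_self,
    Module.finrank_pi] at hrank
  have hkerdim : Module.finrank ℝ (LinearMap.ker (dotL a)) = Fintype.card (Edge n) - 1 := by
    omega
  have hvs : Module.finrank ℝ (vectorSpan ℝ G) = Fintype.card (Edge n) - 1 := by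
    rw [← hGdim, adim, direction_affineSpan]
  have heq : vectorSpan ℝ G = LinearMap.ker (dotL a) :=
    Submodule.eq_of_le_of_finrank_le hspan_le (by rw [hkerdim, hvs])
  obtain ⟨p, hp⟩ := hGne
  have hyp : y - p ∈ LinearMap.ker (dotL a) := by
    simp only [LinearMap.mem_ker, map_sub]
    rw [dotL_apply, dotL_apply, hy, hGa p hp, sub_self]
  rw [← heq] at hyp
  have := hspanc hyp
  simp only [LinearMap.mem_ker, map_sub] at this
  rw [dotL_apply, dotL_apply, hGc p hp] at this
  linarith

end Helpers4

set_option maxHeartbeats 2000000 in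
/-- under the parsimonious property of an NR relaxation, a
non-NR-facet-defining inequality cannot be written as a nonnegative combination
of the relaxation's inequalities plus a combination of degree equations. -/
theorem stmt18 (n k : ℕ) (hn : 5 ≤ n) (b : Fin k → Edge n → ℝ)
    (hbvalid : ∀ j, ∀ x ∈ gtsp n, 1 ≤ dot (b j) x)
    (hbNR : ∀ j, IsNRFacet n {x ∈ gtsp n | dot (b j) x = 1})
    (hpars : Parsimonious n b)
    (c : Edge n → ℝ) (γ : ℝ)
    (hcvalid : ∀ x ∈ gtsp n, γ ≤ dot c x)
    (hcface : IsNonNRFacet n {x ∈ gtsp n | dot c x = γ}) :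
    ¬ ∃ (t : Fin k → ℝ) (μ : Fin n → ℝ), (∀ j, 0 ≤ t j) ∧
        c = (fun e => ∑ j, t j * b j e - ∑ v, μ v * delta v e) ∧
        γ = ∑ j, t j - ∑ v, μ v := by
  rintro ⟨t, μ, ht, hc, hγ⟩
  set G : Set (Edge n → ℝ) := {x ∈ gtsp n | dot c x = γ} with hGdef
  obtain ⟨⟨hGface, hGdim⟩, hGgood, hGnotdeg, hGS⟩ := hcface
  have hn3 : 3 ≤ n := by omega
  -- an explicit edge
  set v0 : Fin n := ⟨0, by omega⟩ with hv0
  set v1 : Fin n := ⟨1, by omega⟩ with hv1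
  have h01 : v0 ≠ v1 := by simp [hv0, hv1, Fin.ext_iff]
  set e₀ : Edge n := ⟨s(v0, v1), fun hd => h01 (Sym2.mk_isDiag_iff.mp hd)⟩ with he₀
  have hGne : G.Nonempty := by
    obtain ⟨x, hx, _⟩ := hGgood e₀
    exact ⟨x, hx⟩
  -- decomposition of the linear functional
  have hdec : ∀ y : Edge n → ℝ,
      dot c y = ∑ j, t j * dot (b j) y - ∑ v, μ v * dot (delta v) y := by
    intro y
    rw [hc]
    unfold dot
    have hpt : ∀ e : Edge n, (∑ j, t j * b j e - ∑ v, μ v * delta v e) * y e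
        = (∑ j, t j * (b j e * y e)) - (∑ v, μ v * (delta v e * y e)) := by
      intro e
      rw [sub_mul, Finset.sum_mul, Finset.sum_mul]
      congr 1 <;> exact Finset.sum_congr rfl fun _ _ => by ring
    rw [Finset.sum_congr rfl fun e _ => hpt e, Finset.sum_sub_distrib]
    congr 1
    · rw [Finset.sum_comm]
      exact Finset.sum_congr rfl fun j _ => by rw [← Finset.mul_sum]
    · rw [Finset.sum_comm]
      exact Finset.sum_congr rfl fun v _ => by rw [← Finset.mul_sum]
  have hGconv : Convex ℝ G := by
    intro x hx y hy α β hα hβ hαβ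
    exact ⟨convex_gtsp hx.1 hy.1 hα hβ hαβ,
      by rw [dot_combo, hx.2, hy.2, ← add_mul, hαβ, one_mul]⟩
  have hmetric : IsMetric c := metric_of_good c γ hcvalid hGgood
  have hcnn : ∀ e, 0 ≤ c e := fun e => nonneg_of_metric hn3 hmetric e
  by_cases hc0 : c = 0
  · -- then the face is everything, contradicting the dimension gap with `stsp`
    obtain ⟨x0, hx0, _⟩ := hGgood e₀
    have hγ0 : γ = 0 := by
      have := hx0.2
      rw [hc0] at this
      simpa [dot] using this.symm
    have hGeq : G = gtsp n := Set.ext fun x =>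
      ⟨fun h => h.1, fun h => ⟨h, by rw [hc0, hγ0]; simp [dot]⟩⟩
    rw [hGeq, Set.inter_eq_right.mpr (stsp_subset_gtsp hn3)] at hGS
    omega
  -- a strictly positive coordinate of c
  obtain ⟨ep, hep⟩ := Function.ne_iff.mp hc0
  simp only [Pi.zero_apply] at hep
  have hcep : 0 < c ep := lt_of_le_of_ne (hcnn ep) (Ne.symm hep)
  have hGdim' : adim G = Fintype.card (Edge n) - 1 := by rw [card_edge]; exact hGdim
  -- slack in every degree constraint somewhere on G
  have hdslack : ∀ v, ∃ x, x ∈ G ∧ 1 < dot (delta v) x := by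
    intro v
    by_contra hcon
    push_neg at hcon
    have hGa : ∀ x ∈ G, dot (delta v) x = 1 := fun x hx =>
      le_antisymm (hcon x hx) (gtsp_delta_ge hx.1 v)
    obtain ⟨v', hv'⟩ : ∃ v' : Fin n, v' ≠ v := by
      rcases eq_or_ne v v0 with h | h
      · exact ⟨v1, by rw [h]; exact Ne.symm h01⟩
      · exact ⟨v0, Ne.symm h⟩
    have hdne : delta v ≠ 0 := by
      intro h
      have h2 : delta v (⟨s(v, v'), fun hd => hv' (Sym2.mk_isDiag_iff.mp hd).symm⟩ : Edge n) = 0 := by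
        rw [h]; rfl
      unfold delta at h2
      rw [if_pos (by simp [Sym2.mem_iff])] at h2
      norm_num at h2
    apply hGnotdeg
    refine ⟨v, Set.ext fun x => ⟨fun hx => ⟨hx.1, hGa x hx⟩, ?_⟩⟩
    rintro ⟨hxg, hxd⟩
    exact ⟨hxg, hyperplane_absorb G hGne hGdim' (delta v) hdne 1 hGa c γ
      (fun x hx => hx.2) hxd⟩
  -- slack in every relaxation constraint somewhere on G
  have hbslack : ∀ j, ∃ x, x ∈ G ∧ 1 < dot (b j) x := by
    intro j
    by_contra hcon
    push_neg at hcon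
    have hGa : ∀ x ∈ G, dot (b j) x = 1 := fun x hx =>
      le_antisymm (hcon x hx) (hbvalid j x hx.1)
    have hbne : b j ≠ 0 := by
      intro h
      have := hbvalid j (hamVec 1) (hamVec_mem_gtsp hn3 1)
      rw [h] at this
      simp only [dot, Pi.zero_apply, zero_mul, Finset.sum_const_zero] at this
      linarith
    have hGeq : G = {x ∈ gtsp n | dot (b j) x = 1} := Set.ext fun x =>
      ⟨fun hx => ⟨hx.1, hGa x hx⟩, fun hx => ⟨hx.1,
        hyperplane_absorb G hGne hGdim' (b j) hbne 1 hGa c γ (fun x hx => hx.2) hx.2⟩⟩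
    have hFS := (hbNR j).2.2
    rw [← hGeq] at hFS
    omega
  -- a point of G with slack in everything
  choose pb hpbG hpbS using hbslack
  choose pd hpdG hpdS using hdslack
  choose pe hpeG hpeS using fun e => hGgood e
  obtain ⟨xs, hxsG, hxs_e, hxs_b, hxs_d⟩ :
      ∃ xs, xs ∈ G ∧ (∀ e, 0 < xs e) ∧ (∀ j, 1 < dot (b j) xs) ∧
        (∀ v, 1 < dot (delta v) xs) := by
    classical
    let ι := Sum (Fin k) (Sum (Fin n) (Edge n))
    let p : ι → Edge n → ℝ := Sum.elim pb (Sum.elim pd pe)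
    have hpG : ∀ i, p i ∈ G := by
      rintro (j | v | e)
      exacts [hpbG j, hpdG v, hpeG e]
    haveI : Nonempty ι := ⟨Sum.inr (Sum.inr e₀)⟩
    have hCpos : (0:ℝ) < (Fintype.card ι : ℝ) := by exact_mod_cast Fintype.card_pos
    refine ⟨∑ i, ((Fintype.card ι : ℝ)⁻¹) • p i, ?_, ?_, ?_, ?_⟩
    · refine hGconv.sum_mem (fun i _ => by positivity) ?_ (fun i _ => hpG i)
      rw [Finset.sum_const, Finset.card_univ, nsmul_eq_mul, mul_inv_cancel₀ (by positivity)]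
    · intro e
      have hco : (∑ i, ((Fintype.card ι : ℝ)⁻¹) • p i) e
          = ∑ i, ((Fintype.card ι : ℝ)⁻¹) * p i e := by simp [Finset.sum_apply]
      rw [hco]
      refine Finset.sum_pos'
        (fun i _ => mul_nonneg (by positivity) (gtsp_nonneg (hpG i).1 e))
        ⟨Sum.inr (Sum.inr e), Finset.mem_univ _, ?_⟩
      have hps := hpeS e
      have hpe : p (Sum.inr (Sum.inr e)) = pe e := rfl
      rw [hpe]
      positivity
    · intro j
      rw [dot_sum_smul]
      have hone : (1:ℝ) = ∑ _i : ι, (Fintype.card ι : ℝ)⁻¹ := by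
        rw [Finset.sum_const, Finset.card_univ, nsmul_eq_mul, mul_inv_cancel₀ (by positivity)]
      rw [hone]
      refine Finset.sum_lt_sum (fun i _ => ?_) ⟨Sum.inl j, Finset.mem_univ _, ?_⟩
      · have := hbvalid j (p i) (hpG i).1
        nlinarith [inv_pos.mpr hCpos]
      · have hps := hpbS j
        have hpj : p (Sum.inl j) = pb j := rfl
        rw [hpj]
        have hCi : (0:ℝ) < (Fintype.card ι : ℝ)⁻¹ := inv_pos.mpr hCpos
        nlinarith
    · intro v
      rw [dot_sum_smul]
      have hone : (1:ℝ) = ∑ _i : ι, (Fintype.card ι : ℝ)⁻¹ := by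
        rw [Finset.sum_const, Finset.card_univ, nsmul_eq_mul, mul_inv_cancel₀ (by positivity)]
      rw [hone]
      refine Finset.sum_lt_sum (fun i _ => ?_) ⟨Sum.inr (Sum.inl v), Finset.mem_univ _, ?_⟩
      · have := gtsp_delta_ge (hpG i).1 v
        nlinarith [inv_pos.mpr hCpos]
      · have hps := hpdS v
        have hpv : p (Sum.inr (Sum.inl v)) = pd v := rfl
        rw [hpv]
        have hCi : (0:ℝ) < (Fintype.card ι : ℝ)⁻¹ := inv_pos.mpr hCpos
        nlinarith
  -- choose a perturbation size
  obtain ⟨ε, hεpos, hεe, hεb, hεd⟩ :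
      ∃ ε : ℝ, 0 < ε ∧ ε < xs ep ∧ (∀ j, ε * b j ep < dot (b j) xs - 1) ∧
        (∀ v, ε * delta v ep < dot (delta v) xs - 1) := by
    classical
    set T : Finset ℝ := insert (xs ep)
        ((Finset.univ.image fun j : Fin k => (dot (b j) xs - 1) / (1 + |b j ep|))
          ∪ (Finset.univ.image fun v : Fin n => dot (delta v) xs - 1)) with hT
    have hTne : T.Nonempty := ⟨xs ep, Finset.mem_insert_self _ _⟩
    have hTpos : ∀ r ∈ T, 0 < r := by
      intro r hr
      rw [hT] at hr
      rcases Finset.mem_insert.mp hr with h | h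
      · subst h; exact hxs_e ep
      · rcases Finset.mem_union.mp h with h | h
        · obtain ⟨j, _, rfl⟩ := Finset.mem_image.mp h
          exact div_pos (by linarith [hxs_b j]) (by positivity)
        · obtain ⟨v, _, rfl⟩ := Finset.mem_image.mp h
          linarith [hxs_d v]
    have hmpos : 0 < T.min' hTne := hTpos _ (T.min'_mem hTne)
    have hεlt : ∀ r ∈ T, T.min' hTne / 2 < r := by
      intro r hr
      have h1 := T.min'_le r hr
      linarith
    refine ⟨T.min' hTne / 2, by linarith, ?_, ?_, ?_⟩
    · exact hεlt _ (Finset.mem_insert_self _ _)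
    · intro j
      rcases le_or_gt (b j ep) 0 with hb0 | hb0
      · nlinarith [hxs_b j]
      · have hmem : (dot (b j) xs - 1) / (1 + |b j ep|) ∈ T := by
          rw [hT]
          exact Finset.mem_insert_of_mem (Finset.mem_union_left _
            (Finset.mem_image.mpr ⟨j, Finset.mem_univ _, rfl⟩))
        have hlt := hεlt _ hmem
        have hd : (0:ℝ) < 1 + |b j ep| := by positivity
        rw [lt_div_iff₀ hd] at hlt
        have habs : |b j ep| = b j ep := abs_of_pos hb0
        nlinarith
    · intro v
      have hmem : dot (delta v) xs - 1 ∈ T := by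
        rw [hT]
        exact Finset.mem_insert_of_mem (Finset.mem_union_right _
          (Finset.mem_image.mpr ⟨v, Finset.mem_univ _, rfl⟩))
      have hlt := hεlt _ hmem
      have hd1 : delta v ep ≤ 1 := by unfold delta; split_ifs <;> norm_num
      have hd0 : 0 ≤ delta v ep := by unfold delta; split_ifs <;> norm_num
      nlinarith
  set x' : Edge n → ℝ := fun e => xs e - ε * (if e = ep then 1 else 0) with hx'
  have hdx' : ∀ a : Edge n → ℝ, dot a x' = dot a xs - ε * a ep := by
    intro a
    rw [hx']
    unfold dot
    have hpt : ∀ e : Edge n, a e * (xs e - ε * (if e = ep then (1:ℝ) else 0))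
        = a e * xs e - ε * (if e = ep then a e else 0) := by
      intro e; split_ifs <;> ring
    rw [Finset.sum_congr rfl fun e _ => hpt e, Finset.sum_sub_distrib, ← Finset.mul_sum,
      Finset.sum_ite_eq' Finset.univ ep a]
    simp
  have hx'RB : x' ∈ RBge n b := by
    refine ⟨?_, ?_, ?_⟩
    · intro j
      rw [hdx']
      linarith [hεb j]
    · intro v
      rw [hdx']
      linarith [hεd v]
    · intro e
      have hval : x' e = xs e - ε * (if e = ep then 1 else 0) := by rw [hx']
      rw [hval]
      by_cases he : e = ep
      · rw [if_pos he, he, mul_one]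
        linarith
      · rw [if_neg he, mul_zero, sub_zero]
        exact le_of_lt (hxs_e e)
  have hx'c : dot c x' < γ := by
    rw [hdx', hxsG.2]
    nlinarith [hεpos, hcep]
  -- the relaxation with equations is valid for the inequality
  have hBeq_lb : ∀ r ∈ dot c '' RBeq n b, γ ≤ r := by
    rintro r ⟨y, ⟨hyb, hyd, hy0⟩, rfl⟩
    have h1 := hdec y
    have h2 : ∑ v, μ v * dot (delta v) y = ∑ v, μ v :=
      Finset.sum_congr rfl fun v _ => by rw [hyd v, mul_one]
    have h3 : ∑ j, t j ≤ ∑ j, t j * dot (b j) y :=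
      Finset.sum_le_sum fun j _ => by nlinarith [ht j, hyb j]
    rw [h1, h2, hγ]
    linarith
  have hBeq_ne : (dot c '' RBeq n b).Nonempty := by
    refine ⟨dot c (hamVec 1), ⟨hamVec 1, ⟨?_, ?_, ?_⟩, rfl⟩⟩
    · intro j; exact hbvalid j _ (hamVec_mem_gtsp hn3 1)
    · intro v; rw [dot_delta_eq, degree_hamVec hn3 1 v]; norm_num
    · intro e; unfold hamVec; split_ifs <;> norm_num
  have h1 : γ ≤ sInf (dot c '' RBeq n b) := le_csInf hBeq_ne hBeq_lb
  have h2 := hpars c hmetric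
  have hbdd : BddBelow (dot c '' RBge n b) := by
    refine ⟨0, ?_⟩
    rintro r ⟨y, hy, rfl⟩
    exact dot_nonneg' hcnn hy.2.2
  have h3 : sInf (dot c '' RBge n b) ≤ dot c x' := csInf_le hbdd ⟨x', hx'RB, rfl⟩
  linarith

end TSP
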